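/- Let n be a positive integer and let o ∈ S_n be the n-cycle with o(i) = i+1 for 1 ≤ i ≤ n−1 and o(n) = 1. Fix 1 ≤ i < j ≤ n and i ≤ k ≤ j. Then a permutation w ∈ S_n satisfies [w(k) ≥ w(j) ≥ w(i) or w(j) ≥ w(i) ≥ w(k) or w(i) ≥ w(k) ≥ w(j)] if and only if the permutation o∘w (composition acting as o after w) satisfies the same condition; i.e., the set of w satisfying this trichotomy is invariant under left multiplication by o. -/
import Mathlib


/-- Let `o ∈ S_n` be the `n`-cycle `o(i) = i + 1 (mod n)` (i.e. `o(i) = i+1` for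
`1 ≤ i ≤ n−1` and `o(n) = 1` in 1-based terms).  Fix `i < j` and `i ≤ k ≤ j`.
A permutation `w` satisfies
`w(k) ≥ w(j) ≥ w(i) ∨ w(j) ≥ w(i) ≥ w(k) ∨ w(i) ≥ w(k) ≥ w(j)`
iff `o∘w` satisfies the same condition. -/
theorem trichotomy_invariant_under_cycle
    (n : ℕ) (hn : 0 < n) (o : Equiv.Perm (Fin n))
    (ho : ∀ a : Fin n, (o a : ℕ) = ((a : ℕ) + 1) % n)
    (i j k : Fin n) (hij : i < j) (hik : i ≤ k) (hkj : k ≤ j)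
    (w : Equiv.Perm (Fin n)) :
    ((w j ≤ w k ∧ w i ≤ w j) ∨ (w i ≤ w j ∧ w k ≤ w i) ∨
        (w k ≤ w i ∧ w j ≤ w k)) ↔
      (((o * w) j ≤ (o * w) k ∧ (o * w) i ≤ (o * w) j) ∨
        ((o * w) i ≤ (o * w) j ∧ (o * w) k ≤ (o * w) i) ∨
        ((o * w) k ≤ (o * w) i ∧ (o * w) j ≤ (o * w) k)) := by
  have ha := (w i).isLt
  have hb := (w k).isLt
  have hc := (w j).isLt
  have e : ∀ x : Fin n, ((x : ℕ) + 1) % n = if (x : ℕ) + 1 = n then 0 else (x : ℕ) + 1 := by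
    intro x
    rcases eq_or_lt_of_le (Nat.succ_le_of_lt x.isLt) with h | h
    · have h2 : (x : ℕ) + 1 = n := h
      rw [if_pos h2, h2, Nat.mod_self]
    · rw [Nat.mod_eq_of_lt h, if_neg h.ne]
  simp only [Equiv.Perm.mul_apply, Fin.le_def, ho, e]
  split_ifs <;> omega
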